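/- Every nontrivial countable left-orderable group G admits an injective homomorphism ρ: G → Homeo₊(ℝ) (the group of order-preserving bijections of ℝ) with no global fixed point: there is no x ∈ ℝ with ρ(g)(x) = x for all g ∈ G. -/

import Mathlib

noncomputable section DynReAux

namespace DynRe

def eSet (f : ℚ ≃o ℚ) (x : ℝ) : Set ℝ := (fun q : ℚ => ((f q : ℚ) : ℝ)) '' {q : ℚ | (q : ℝ) < x}

lemma eSet_nonempty (f : ℚ ≃o ℚ) (x : ℝ) : (eSet f x).Nonempty := by
  obtain ⟨q, hq⟩ := exists_rat_lt x
  exact ⟨f q, ⟨q, hq, rfl⟩⟩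

lemma eSet_bddAbove (f : ℚ ≃o ℚ) (x : ℝ) : BddAbove (eSet f x) := by
  obtain ⟨q', hq'⟩ := exists_rat_gt x
  refine ⟨(f q' : ℝ), ?_⟩
  rintro _ ⟨q, hq, rfl⟩
  have hqq : q < q' := by exact_mod_cast hq.trans hq'
  show (f q : ℝ) ≤ (f q' : ℝ)
  exact_mod_cast (f.lt_iff_lt.mpr hqq).le

def ext' (f : ℚ ≃o ℚ) (x : ℝ) : ℝ := sSup (eSet f x)

lemma le_ext' (f : ℚ ≃o ℚ) {q : ℚ} {x : ℝ} (h : (q:ℝ) < x) : (f q : ℝ) ≤ ext' f x :=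
  le_csSup (eSet_bddAbove f x) ⟨q, h, rfl⟩

lemma ext'_le (f : ℚ ≃o ℚ) {q : ℚ} {x : ℝ} (h : x ≤ (q:ℝ)) : ext' f x ≤ (f q : ℝ) := by
  apply csSup_le (eSet_nonempty f x)
  rintro _ ⟨p, hp, rfl⟩
  have hpq : p < q := by exact_mod_cast hp.trans_le h
  show (f p : ℝ) ≤ (f q : ℝ)
  exact_mod_cast (f.lt_iff_lt.mpr hpq).le

lemma ext'_rat (f : ℚ ≃o ℚ) (q : ℚ) : ext' f (q:ℝ) = f q := by
  apply csSup_eq_of_forall_le_of_forall_lt_exists_gt (eSet_nonempty f q)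
  · rintro _ ⟨p, hp, rfl⟩
    have hpq : p < q := by exact_mod_cast hp
    show (f p : ℝ) ≤ (f q : ℝ)
    exact_mod_cast (f.lt_iff_lt.mpr hpq).le
  · intro w hw
    obtain ⟨r, hwr, hrq⟩ := exists_rat_btwn hw
    have h1 : r < f q := by exact_mod_cast hrq
    refine ⟨(f (f.symm r) : ℝ), ⟨f.symm r, ?_, rfl⟩, ?_⟩
    · have : f.symm r < q := by rw [← f.lt_iff_lt, f.apply_symm_apply]; exact h1
      exact_mod_cast this
    · rw [f.apply_symm_apply]; exact hwr

lemma ext'_mono (f : ℚ ≃o ℚ) : Monotone (ext' f) := fun x y hxy =>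
  csSup_le_csSup (eSet_bddAbove f y) (eSet_nonempty f x)
    (by rintro _ ⟨p, hp, rfl⟩; exact ⟨p, hp.trans_le hxy, rfl⟩)

lemma ext'_comp (f g : ℚ ≃o ℚ) (x : ℝ) : ext' f (ext' g x) = ext' (g.trans f) x := by
  apply le_antisymm
  · apply csSup_le (eSet_nonempty f _)
    rintro _ ⟨q, hq, rfl⟩
    obtain ⟨_, ⟨p, hp, rfl⟩, hqa⟩ := exists_lt_of_lt_csSup (eSet_nonempty g x) hq
    have hqa' : (q : ℝ) < (g p : ℝ) := hqa
    have hqp : q < g p := by exact_mod_cast hqa'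
    have h2 : (f q : ℝ) ≤ ((g.trans f) p : ℝ) := by
      exact_mod_cast (f.lt_iff_lt.mpr hqp).le
    exact h2.trans (le_csSup (eSet_bddAbove _ x) ⟨p, hp, rfl⟩)
  · apply csSup_le (eSet_nonempty _ x)
    rintro _ ⟨p, hp, rfl⟩
    show ((g.trans f) p : ℝ) ≤ ext' f (ext' g x)
    have h1 : ((g.trans f) p : ℝ) = ext' f ((g p : ℚ) : ℝ) := (ext'_rat f (g p)).symm
    rw [h1]
    exact ext'_mono f (le_ext' g hp)

lemma ext'_id (f : ℚ ≃o ℚ) (hf : ∀ q, f q = q) (x : ℝ) : ext' f x = x := by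
  apply csSup_eq_of_forall_le_of_forall_lt_exists_gt (eSet_nonempty f x)
  · rintro _ ⟨p, hp, rfl⟩
    show (f p : ℝ) ≤ x
    rw [hf]; exact hp.le
  · intro w hw
    obtain ⟨r, h1, h2⟩ := exists_rat_btwn hw
    exact ⟨(f r : ℝ), ⟨r, h2, rfl⟩, by rw [hf]; exact h1⟩

def extIso (f : ℚ ≃o ℚ) : ℝ ≃o ℝ :=
  Equiv.toOrderIso
    ⟨ext' f, ext' f.symm,
      fun x => by
        rw [ext'_comp, OrderIso.self_trans_symm]
        exact ext'_id (OrderIso.refl ℚ) (fun q => rfl) x,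
      fun x => by
        rw [ext'_comp, OrderIso.symm_trans_self]
        exact ext'_id (OrderIso.refl ℚ) (fun q => rfl) x⟩
    (ext'_mono f) (ext'_mono f.symm)

@[simp] lemma extIso_apply (f : ℚ ≃o ℚ) (x : ℝ) : extIso f x = ext' f x := rfl

def Emap : (ℚ ≃o ℚ) →* (ℝ ≃o ℝ) where
  toFun := extIso
  map_one' := by
    ext x
    exact ext'_id 1 (fun q => rfl) x
  map_mul' f g := by
    ext x
    exact (ext'_comp f g x).symm

@[simp] lemma Emap_apply (f : ℚ ≃o ℚ) (x : ℝ) : Emap f x = ext' f x := rfl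

/-- Conjugation of order automorphism groups by an order iso. -/
def conjHom {α β : Type*} [Preorder α] [Preorder β] (e : α ≃o β) : (α ≃o α) →* (β ≃o β) where
  toFun f := (e.symm.trans f).trans e
  map_one' := by
    ext x
    exact e.apply_symm_apply x
  map_mul' f g := by
    ext x
    simp [OrderIso.trans_apply]

@[simp] lemma conjHom_apply {α β : Type*} [Preorder α] [Preorder β] (e : α ≃o β)
    (f : α ≃o α) (q : β) : conjHom e f q = e (f (e.symm q)) := rfl

variable {G : Type*} [Group G] [LinearOrder G]

/-- Left translation action of `G` on `G ×ₗ ℚ`. -/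
def lexAct (hmul : ∀ f g h : G, g < h → f * g < f * h) :
    G →* (Lex (G × ℚ) ≃o Lex (G × ℚ)) where
  toFun g := Equiv.toOrderIso
    ⟨fun p => toLex (g * (ofLex p).1, (ofLex p).2),
     fun p => toLex (g⁻¹ * (ofLex p).1, (ofLex p).2),
     fun p => by simp, fun p => by simp⟩
    (by
      have hsm : StrictMono (fun p : Lex (G × ℚ) => toLex (g * (ofLex p).1, (ofLex p).2)) := by
        intro p q h
        rcases (Prod.Lex.lt_iff (x := p) (y := q)).mp h with h1 | ⟨h1, h2⟩
        · exact (Prod.Lex.lt_iff).mpr (Or.inl (hmul g _ _ h1))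
        · exact (Prod.Lex.lt_iff).mpr (Or.inr ⟨by simp only [ofLex_toLex, h1], h2⟩)
      exact hsm.monotone)
    (by
      have hsm : StrictMono (fun p : Lex (G × ℚ) => toLex (g⁻¹ * (ofLex p).1, (ofLex p).2)) := by
        intro p q h
        rcases (Prod.Lex.lt_iff (x := p) (y := q)).mp h with h1 | ⟨h1, h2⟩
        · exact (Prod.Lex.lt_iff).mpr (Or.inl (hmul g⁻¹ _ _ h1))
        · exact (Prod.Lex.lt_iff).mpr (Or.inr ⟨by simp only [ofLex_toLex, h1], h2⟩)
      exact hsm.monotone)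
  map_one' := by
    ext p
    show toLex ((1:G) * (ofLex p).1, (ofLex p).2) = p
    simp
  map_mul' g h := by
    ext p
    show toLex (g * h * (ofLex p).1, (ofLex p).2)
      = toLex (g * (ofLex (toLex (h * (ofLex p).1, (ofLex p).2))).1,
               (ofLex (toLex (h * (ofLex p).1, (ofLex p).2))).2)
    simp [mul_assoc]

lemma lexAct_apply (hmul : ∀ f g h : G, g < h → f * g < f * h) (g : G) (p : Lex (G × ℚ)) :
    lexAct hmul g p = toLex (g * (ofLex p).1, (ofLex p).2) := rfl

end DynRe

end DynReAux

/-- A group is left-orderable if it admits a strict total order invariant under left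
multiplication. -/
def LeftOrderable (G : Type*) [Group G] : Prop :=
  ∃ r : G → G → Prop, IsStrictTotalOrder G r ∧ ∀ f g h : G, r g h → r (f * g) (f * h)

/-- Every nontrivial countable left-orderable group admits an injective homomorphism into
the order-preserving bijections of `ℝ` with no global fixed point. -/
theorem stmt4 (G : Type*) [Group G] [Countable G] [Nontrivial G] (hLO : LeftOrderable G) :
    ∃ ρ : G →* (ℝ ≃o ℝ), Function.Injective ρ ∧ ¬∃ x : ℝ, ∀ g : G, ρ g x = x := by
  classical
  obtain ⟨r, hSTO, hinv⟩ := hLO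
  haveI := hSTO
  letI lin : LinearOrder G := linearOrderOfSTO r
  have hmul : ∀ f g h : G, g < h → f * g < f * h := fun f g h hh => hinv f g h hh
  haveI : Countable (Lex (G × ℚ)) := inferInstanceAs (Countable (G × ℚ))
  haveI : Nonempty (Lex (G × ℚ)) := inferInstanceAs (Nonempty (G × ℚ))
  haveI : DenselyOrdered (Lex (G × ℚ)) := by
    constructor
    intro a b h
    rcases (Prod.Lex.lt_iff (x := a) (y := b)).mp h with h1 | ⟨h1, h2⟩
    · obtain ⟨m, hm⟩ := exists_gt (ofLex a).2
      exact ⟨toLex ((ofLex a).1, m),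
        (Prod.Lex.lt_iff).mpr (Or.inr ⟨rfl, hm⟩),
        (Prod.Lex.lt_iff).mpr (Or.inl h1)⟩
    · obtain ⟨m, hm1, hm2⟩ := exists_between h2
      exact ⟨toLex ((ofLex a).1, m),
        (Prod.Lex.lt_iff).mpr (Or.inr ⟨rfl, hm1⟩),
        (Prod.Lex.lt_iff).mpr (Or.inr ⟨h1, hm2⟩)⟩
  obtain ⟨e⟩ := Order.iso_of_countable_dense (α := Lex (G × ℚ)) (β := ℚ)
  set φ : G →* (ℚ ≃o ℚ) := (DynRe.conjHom e).comp (DynRe.lexAct hmul) with hφ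
  refine ⟨DynRe.Emap.comp φ, ?_, ?_⟩
  · rw [injective_iff_map_eq_one]
    intro g hg
    have h1 : ∀ q : ℚ, (φ g q : ℝ) = (q : ℝ) := by
      intro q
      have := congrArg (fun F : ℝ ≃o ℝ => F (q : ℝ)) hg
      simpa [DynRe.ext'_rat] using this
    have h1' : φ g (e (toLex (1, 0))) = e (toLex (1, 0)) := by
      exact_mod_cast h1 (e (toLex (1, 0)))
    rw [hφ, MonoidHom.comp_apply, DynRe.conjHom_apply, e.symm_apply_apply] at h1'
    have h2 := e.injective h1'
    rw [DynRe.lexAct_apply] at h2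
    have h3 : g * (1 : G) = 1 := congrArg (fun p : Lex (G × ℚ) => (ofLex p).1) h2
    simpa using h3
  · rintro ⟨x, hx⟩
    obtain ⟨q0, hq0⟩ := exists_rat_lt x
    obtain ⟨q1, hq1⟩ := exists_rat_gt x
    have hpos : ∃ f : G, (1:G) < f := by
      obtain ⟨f0, hf0⟩ := exists_ne (1 : G)
      rcases lt_trichotomy 1 f0 with h | h | h
      · exact ⟨f0, h⟩
      · exact absurd h.symm hf0
      · refine ⟨f0⁻¹, ?_⟩
        have := hmul f0⁻¹ f0 1 h
        simpa using this
    obtain ⟨f, hf⟩ := hpos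
    set p0 : G × ℚ := ofLex (e.symm q0) with hp0
    set p1 : G × ℚ := ofLex (e.symm q1) with hp1
    set g : G := p1.1 * f * p0.1⁻¹ with hg
    have hgt : p1.1 < g * p0.1 := by
      have hge : g * p0.1 = p1.1 * f := by
        rw [hg]; group
      rw [hge]
      have := hmul p1.1 1 f hf
      simpa using this
    have h2 : q1 < φ g q0 := by
      have hlt : e.symm q1 < DynRe.lexAct hmul g (e.symm q0) := by
        rw [DynRe.lexAct_apply]
        exact (Prod.Lex.lt_iff (x := e.symm q1)).mpr (Or.inl hgt)
      have := e.lt_iff_lt.mpr hlt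
      rwa [e.apply_symm_apply] at this
    have h3 : (DynRe.Emap.comp φ) g (q0 : ℝ) < x := by
      have hlt := ((DynRe.Emap.comp φ) g).lt_iff_lt.mpr
        (show (q0 : ℝ) < x from hq0)
      rwa [hx g] at hlt
    have h4 : (DynRe.Emap.comp φ) g (q0 : ℝ) = ((φ g q0 : ℚ) : ℝ) := by
      simp [DynRe.ext'_rat]
    rw [h4] at h3
    have h5 : (q1 : ℝ) < x := lt_trans (by exact_mod_cast h2) h3
    exact absurd h5 (not_lt.mpr hq1.le)
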